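/- Let F be a field of characteristic zero and f : Z → F satisfy (k - l)·f(k + l) = (k + l)·(f(k) - f(l)) for all integers k, l. Then for every k ∈ Z, f(k) = (k/2)·(4f(1) − f(2)) + (k²/2)·(f(2) − 2f(1)). -/
import Mathlib


theorem stmt_1 {F : Type*} [Field F] [CharZero F] (f : ℤ → F)
    (hf : ∀ k l : ℤ, ((k - l : ℤ) : F) * f (k + l) = ((k + l : ℤ) : F) * (f k - f l)) :
    ∀ k : ℤ, f k = ((k : F) / 2) * (4 * f 1 - f 2) + ((k : F) ^ 2 / 2) * (f 2 - 2 * f 1) := by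
  set g : ℤ → F := fun k => ((k : F) / 2) * (4 * f 1 - f 2) + ((k : F) ^ 2 / 2) * (f 2 - 2 * f 1)
    with hg
  have h0 : f 0 = 0 := by
    have h := hf 1 (-1)
    norm_num at h
    exact h
  have hm1 : f (-1) = f 2 - 3 * f 1 := by
    have h := hf 2 (-1)
    norm_num at h
    linear_combination h
  have hm2 : f (-2) = 3 * f 2 - 8 * f 1 := by
    have h1 := hf (-2) (-1)
    have h2 := hf 1 (-3)
    norm_num at h1 h2
    linear_combination (-1/2 : F) * h2 - h1 + 3 * hm1
  have hup : ∀ n : ℤ, 2 ≤ n → f n = g n → f (n + 1) = g (n + 1) := by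
    intro n hn ih
    have h := hf n 1
    have hne : ((n - 1 : ℤ) : F) ≠ 0 := by
      rw [Int.cast_ne_zero]; omega
    rw [ih] at h
    refine mul_left_cancel₀ hne ?_
    rw [h, hg]
    push_cast
    ring
  have hdn : ∀ n : ℤ, n ≤ -2 → f n = g n → f (n - 1) = g (n - 1) := by
    intro n hn ih
    have h := hf n (-1)
    have hne : ((n + 1 : ℤ) : F) ≠ 0 := by
      rw [Int.cast_ne_zero]; omega
    rw [ih, hm1] at h
    have h' : (n + -1 : ℤ) = n - 1 := by ring
    rw [h', sub_neg_eq_add] at h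
    refine mul_left_cancel₀ hne ?_
    rw [h, hg]
    push_cast
    ring
  have hf1 : f 1 = g 1 := by rw [hg]; push_cast; ring
  have hf2 : f 2 = g 2 := by rw [hg]; push_cast; ring
  have hpos : ∀ n : ℕ, f n = g n := by
    intro n
    induction n with
    | zero => simpa [hg] using h0
    | succ n ih =>
      match n, ih with
      | 0, _ => exact_mod_cast hf1
      | 1, _ => exact_mod_cast hf2
      | (m + 2), ih =>
        have := hup (m + 2) (by omega) (by exact_mod_cast ih)
        push_cast
        convert this using 2 <;> push_cast <;> ring
  have hneg : ∀ n : ℕ, f (-n) = g (-n) := by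
    intro n
    induction n with
    | zero => simpa [hg] using h0
    | succ n ih =>
      match n, ih with
      | 0, _ =>
        have e : (-((0 + 1 : ℕ) : ℤ)) = -1 := by norm_num
        rw [e, hm1, hg]; push_cast; ring
      | 1, _ =>
        have e : (-((1 + 1 : ℕ) : ℤ)) = -2 := by norm_num
        rw [e, hm2, hg]; push_cast; ring
      | (m + 2), ih =>
        have := hdn (-(m + 2)) (by omega) (by exact_mod_cast ih)
        have he : (-(m + 2) - 1 : ℤ) = -((m : ℤ) + 3) := by ring
        rw [he] at this
        push_cast
        convert this using 2 <;> push_cast <;> ring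
  intro k
  rcases Int.natAbs_eq k with h | h
  · rw [h]; exact hpos k.natAbs
  · rw [h]; exact hneg k.natAbs
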